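/- Let P(λ) = Σ_{i=0}^{n} (-1)^i a_i λ^{n-i} be a monic polynomial (a_0 = 1) of degree n all of whose roots are positive real numbers. Then for each i with 2 ≤ i ≤ n, we have 0 < a_i ≤ C(n,i)·(a_1/n)^i. -/

import Mathlib

open Polynomial Finset Multiset

private lemma msum_nonneg (s : Multiset ℝ) (h : ∀ x ∈ s, 0 ≤ x) : 0 ≤ s.sum := by
  induction s using Multiset.induction_on with
  | empty => simp
  | cons a s ih =>
    rw [Multiset.sum_cons]
    have := h a (Multiset.mem_cons_self a s)
    have := ih (fun x hx => h x (Multiset.mem_cons_of_mem hx))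
    linarith

private lemma mprod_nonneg (s : Multiset ℝ) (h : ∀ x ∈ s, 0 ≤ x) : 0 ≤ s.prod := by
  induction s using Multiset.induction_on with
  | empty => simp
  | cons a s ih =>
    rw [Multiset.prod_cons]
    exact mul_nonneg (h a (Multiset.mem_cons_self a s))
      (ih (fun x hx => h x (Multiset.mem_cons_of_mem hx)))

private lemma mprod_pos (s : Multiset ℝ) (h : ∀ x ∈ s, 0 < x) : 0 < s.prod := by
  induction s using Multiset.induction_on with
  | empty => simp
  | cons a s ih =>
    rw [Multiset.prod_cons]
    exact mul_pos (h a (Multiset.mem_cons_self a s))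
      (ih (fun x hx => h x (Multiset.mem_cons_of_mem hx)))

private lemma esymm_pos (t : Multiset ℝ) (h : ∀ x ∈ t, 0 < x) (k : ℕ)
    (hk : k ≤ Multiset.card t) : 0 < t.esymm k := by
  rw [Multiset.esymm]
  have hne : (Multiset.powersetCard k t) ≠ 0 := by
    intro h0
    have := Multiset.card_powersetCard k t
    rw [h0] at this
    simp at this
    have := Nat.choose_pos hk
    omega
  obtain ⟨u, hu⟩ := Multiset.exists_mem_of_ne_zero hne
  have hsub := (Multiset.mem_powersetCard.mp hu).1
  have hup : 0 < u.prod := mprod_pos u (fun x hx => h x (Multiset.mem_of_le hsub hx))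
  have hmem : u.prod ∈ (Multiset.powersetCard k t).map Multiset.prod :=
    Multiset.mem_map_of_mem _ hu
  obtain ⟨r, hr⟩ := Multiset.exists_cons_of_mem hmem
  rw [hr, Multiset.sum_cons]
  have : 0 ≤ r.sum := by
    apply msum_nonneg
    intro x hx
    have hx' : x ∈ (Multiset.powersetCard k t).map Multiset.prod := by
      rw [hr]; exact Multiset.mem_cons_of_mem hx
    obtain ⟨v, hv, rfl⟩ := Multiset.mem_map.mp hx'
    exact le_of_lt (mprod_pos v (fun y hy =>
      h y (Multiset.mem_of_le (Multiset.mem_powersetCard.mp hv).1 hy)))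
  linarith

private lemma esymm_card_eq_prod (s : Multiset ℝ) : s.esymm (Multiset.card s) = s.prod := by
  rw [Multiset.esymm]
  have : Multiset.powersetCard (Multiset.card s) s = {s} := by
    have hcard : Multiset.card (Multiset.powersetCard (Multiset.card s) s) = 1 := by
      rw [Multiset.card_powersetCard, Nat.choose_self]
    obtain ⟨u, hu⟩ := Multiset.card_eq_one.mp hcard
    have hmem : u ∈ Multiset.powersetCard (Multiset.card s) s := by rw [hu]; simp
    obtain ⟨hle, hc⟩ := Multiset.mem_powersetCard.mp hmem
    have : u = s := Multiset.eq_of_le_of_card_le hle (le_of_eq hc.symm)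
    rw [hu, this]
  rw [this]
  simp


private lemma esymm_one' (s : Multiset ℝ) : s.esymm 1 = s.sum := by
  rw [Multiset.esymm, Multiset.powersetCard_one, Multiset.map_map]
  simp

private lemma amgm_multiset (m : ℕ) (hm : 0 < m) (s : Multiset ℝ)
    (hc : Multiset.card s = m) (h0 : ∀ x ∈ s, 0 ≤ x) :
    s.prod ≤ (s.sum / m) ^ m := by
  obtain ⟨l, rfl⟩ : ∃ l : List ℝ, s = ↑l := ⟨s.toList, (Multiset.coe_toList s).symm⟩
  rw [Multiset.coe_card] at hc
  subst hc
  rw [Multiset.prod_coe, Multiset.sum_coe]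
  have hlen : 0 < l.length := hm
  have hget : ∀ j : Fin l.length, 0 ≤ l.get j := fun j => h0 _ (by
    simpa using List.get_mem l j)
  have hprod : l.prod = ∏ j : Fin l.length, l.get j := by
    conv_lhs => rw [← List.ofFn_get l]
    rw [List.prod_ofFn]
  have hsum : l.sum = ∑ j : Fin l.length, l.get j := by
    conv_lhs => rw [← List.ofFn_get l]
    rw [List.sum_ofFn]
  set L := (l.length : ℝ) with hL
  have hLpos : (0:ℝ) < L := by rw [hL]; exact_mod_cast hlen
  have key := Real.geom_mean_le_arith_mean_weighted Finset.univ
    (fun _ : Fin l.length => L⁻¹) l.get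
    (fun i _ => by positivity) (by
      rw [Finset.sum_const, Finset.card_univ, Fintype.card_fin, nsmul_eq_mul]
      field_simp
      exact hL.symm) (fun i _ => hget i)
  have hlhs : (∏ i : Fin l.length, l.get i ^ (L⁻¹ : ℝ)) = l.prod ^ (L⁻¹ : ℝ) := by
    rw [hprod, ← Real.finset_prod_rpow _ _ (fun i _ => hget i)]
  have hrhs : (∑ i : Fin l.length, L⁻¹ * l.get i) = l.sum / L := by
    rw [hsum, ← Finset.mul_sum]; ring
  rw [hlhs, hrhs] at key
  have hprodnn : 0 ≤ l.prod := by rw [hprod]; exact Finset.prod_nonneg (fun i _ => hget i)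
  calc l.prod = (l.prod ^ (L⁻¹ : ℝ)) ^ l.length := by
        rw [← Real.rpow_natCast (l.prod ^ (L⁻¹:ℝ)) l.length, ← Real.rpow_mul hprodnn]
        rw [inv_mul_cancel₀ (ne_of_gt hLpos), Real.rpow_one]
    _ ≤ (l.sum / L) ^ l.length := by
        exact pow_le_pow_left₀ (Real.rpow_nonneg hprodnn _) key l.length

private lemma splits_derivative (P : ℝ[X]) (h : P.Splits) :
    (derivative P).Splits := by
  rcases eq_or_ne (derivative P) 0 with h0 | h0
  · rw [h0]; exact Splits.zero
  · have hd1 : P.natDegree ≠ 0 := by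
      intro hd
      obtain ⟨c, rfl⟩ := Polynomial.natDegree_eq_zero.mp hd
      simp at h0
    have hcard : Multiset.card P.roots = P.natDegree := splits_iff_card_roots.mp h
    have h1 := P.card_roots_le_derivative
    have h2 := (derivative P).card_roots'
    have h3 : (derivative P).natDegree < P.natDegree := natDegree_derivative_lt hd1
    rw [splits_iff_card_roots]
    omega

private lemma no_nonpos_root (Q : ℝ[X]) (m : ℕ) (hm : Q.natDegree = m)
    (hsign : ∀ j ≤ m, 0 < (-1:ℝ)^(m-j) * Q.coeff j) :
    ∀ x : ℝ, x ≤ 0 → ¬ Q.IsRoot x := by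
  intro x hx hroot
  have heval : Q.eval x = ∑ j ∈ Finset.range (m+1), Q.coeff j * x ^ j := by
    rw [eval_eq_sum_range' (by omega : Q.natDegree < m + 1)]
  have hpos : 0 < ∑ j ∈ Finset.range (m+1), ((-1:ℝ)^(m-j) * Q.coeff j) * (-x) ^ j := by
    apply Finset.sum_pos' (fun j hj => ?_) ⟨0, Finset.mem_range.mpr (by omega), by
      simpa using hsign 0 (Nat.zero_le m)⟩
    have hjm : j ≤ m := Nat.lt_succ_iff.mp (Finset.mem_range.mp hj)
    exact mul_nonneg (le_of_lt (hsign j hjm)) (pow_nonneg (by linarith) j)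
  have hrw : ∀ j ∈ Finset.range (m+1),
      ((-1:ℝ)^(m-j) * Q.coeff j) * (-x) ^ j = (-1:ℝ)^m * (Q.coeff j * x ^ j) := by
    intro j hj
    have hjm : j ≤ m := Nat.lt_succ_iff.mp (Finset.mem_range.mp hj)
    rw [neg_pow x j]
    have : (-1:ℝ)^(m-j) * (-1:ℝ)^j = (-1:ℝ)^m := by
      rw [← pow_add, Nat.sub_add_cancel hjm]
    ring_nf
    rw [← this]
    ring
  rw [Finset.sum_congr rfl hrw, ← Finset.mul_sum, ← heval, hroot] at hpos
  simp at hpos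


theorem stmt_0 (n : ℕ) (hn : 2 ≤ n) (a : ℕ → ℝ) (ha0 : a 0 = 1)
    (P : Polynomial ℝ)
    (hP : P = ∑ i ∈ Finset.range (n + 1), Polynomial.C ((-1) ^ i * a i) * Polynomial.X ^ (n - i))
    (hsplit : P.Splits)
    (hpos : ∀ x : ℝ, P.IsRoot x → 0 < x) :
    ∀ i : ℕ, 2 ≤ i → i ≤ n →
      0 < a i ∧ a i ≤ (n.choose i : ℝ) * (a 1 / n) ^ i := by
  intro i hi2 hin
  -- coefficients of P
  have hcoeff : ∀ m : ℕ, P.coeff m = if m ≤ n then (-1:ℝ)^(n-m) * a (n-m) else 0 := by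
    intro m
    rw [hP, finset_sum_coeff]
    simp only [coeff_C_mul, coeff_X_pow]
    by_cases hmn : m ≤ n
    · rw [if_pos hmn, Finset.sum_eq_single (n - m)]
      · simp [Nat.sub_sub_self hmn]
      · intro b hb hbne
        have hb' : b ≤ n := Nat.lt_succ_iff.mp (Finset.mem_range.mp hb)
        have : ¬ m = n - b := by omega
        simp [this]
      · intro hnm; exact absurd (Finset.mem_range.mpr (by omega)) hnm
    · rw [if_neg hmn]
      apply Finset.sum_eq_zero
      intro b hb
      have hb' : b ≤ n := Nat.lt_succ_iff.mp (Finset.mem_range.mp hb)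
      have : ¬ m = n - b := by omega
      simp [this]
  have hPn : P.coeff n = 1 := by
    rw [hcoeff, if_pos (le_refl n)]
    simp [ha0]
  have hdeg : P.natDegree = n := by
    refine le_antisymm (natDegree_le_iff_coeff_eq_zero.mpr fun N hN => ?_)
      (le_natDegree_of_ne_zero (by rw [hPn]; norm_num))
    rw [hcoeff, if_neg (by omega)]
  have hPne : P ≠ 0 := fun h => by simp [h] at hPn
  have hcardt : Multiset.card P.roots = n := by
    rw [splits_iff_card_roots.mp hsplit, hdeg]
  have htpos : ∀ x ∈ P.roots, 0 < x := fun x hx => hpos x (Polynomial.mem_roots'.mp hx).2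
  have hlcP : P.leadingCoeff = 1 := by rw [leadingCoeff, hdeg, hPn]
  have ha : ∀ j, j ≤ n → a j = P.roots.esymm j := by
    intro j hj
    have hv := Polynomial.coeff_eq_esymm_roots_of_splits hsplit
      (k := n - j) (by rw [hdeg]; omega)
    rw [hdeg, hlcP, one_mul, Nat.sub_sub_self hj, hcoeff, if_pos (by omega),
      Nat.sub_sub_self hj] at hv
    exact mul_left_cancel₀ (pow_ne_zero j (by norm_num : (-1:ℝ) ≠ 0)) hv
  have ha1 : a 1 = P.roots.sum := by rw [ha 1 (by omega), esymm_one']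
  have hai : a i = P.roots.esymm i := ha i hin
  have haipos : 0 < a i := by
    rw [hai]; exact esymm_pos _ htpos i (by rw [hcardt]; exact hin)
  refine ⟨haipos, ?_⟩
  -- iterated derivative
  set k := n - i with hk
  have hik : i + k = n := by omega
  have hit : ∀ K : ℕ, (derivative^[K] P).Splits := by
    intro K
    induction K with
    | zero => simpa using hsplit
    | succ K ih => rw [Function.iterate_succ_apply']; exact splits_derivative _ ih
  set Q := derivative^[k] P with hQ
  have hQc : ∀ j, Q.coeff j = ((j+k).descFactorial k : ℝ) * P.coeff (j+k) := by
    intro j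
    rw [hQ, Polynomial.coeff_iterate_derivative, nsmul_eq_mul]
  have hQsplit : Q.Splits := hit k
  have hdpos : (0:ℝ) < (n.descFactorial k : ℕ) := by
    have : n.descFactorial k ≠ 0 := by
      rw [Ne, Nat.descFactorial_eq_zero_iff_lt]; omega
    exact_mod_cast Nat.pos_of_ne_zero this
  have hQtop : Q.coeff i = (n.descFactorial k : ℝ) := by
    rw [hQc, hik, hcoeff, if_pos (le_refl n)]
    simp [ha0]
  have hQdeg : Q.natDegree = i := by
    refine le_antisymm (natDegree_le_iff_coeff_eq_zero.mpr fun N hN => ?_)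
      (le_natDegree_of_ne_zero (by rw [hQtop]; exact ne_of_gt hdpos))
    rw [hQc, hcoeff, if_neg (by omega), mul_zero]
  have hQne : Q ≠ 0 := fun h => by rw [h] at hQtop; simp at hQtop; linarith [hdpos, hQtop]
  have hsign : ∀ j, j ≤ i → 0 < (-1:ℝ)^(i-j) * Q.coeff j := by
    intro j hj
    rw [hQc, hcoeff, if_pos (by omega)]
    have hnk : n - (j+k) = i - j := by omega
    rw [hnk, ha (i-j) (by omega)]
    have h1 : (0:ℝ) < ((j+k).descFactorial k : ℕ) := by
      have : (j+k).descFactorial k ≠ 0 := by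
        rw [Ne, Nat.descFactorial_eq_zero_iff_lt]; omega
      exact_mod_cast Nat.pos_of_ne_zero this
    have h2 : 0 < P.roots.esymm (i-j) := esymm_pos _ htpos _ (by rw [hcardt]; omega)
    set c := (-1:ℝ)^(i-j) with hc
    have hcc : c * c = 1 := by rw [hc, ← mul_pow]; norm_num
    have heq : c * (((j+k).descFactorial k : ℝ) * (c * P.roots.esymm (i-j)))
        = (c * c) * (((j+k).descFactorial k : ℝ) * P.roots.esymm (i-j)) := by ring
    rw [heq, hcc, one_mul]
    exact mul_pos h1 h2
  have hcards : Multiset.card Q.roots = i := by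
    rw [splits_iff_card_roots.mp hQsplit, hQdeg]
  have hspos : ∀ x ∈ Q.roots, 0 < x := by
    intro x hx
    by_contra h
    exact no_nonpos_root Q i hQdeg hsign x (le_of_not_gt h) (Polynomial.mem_roots'.mp hx).2
  have hlcQ : Q.leadingCoeff = (n.descFactorial k : ℝ) := by rw [leadingCoeff, hQdeg, hQtop]
  -- Vieta for Q at 0
  have v0 := Polynomial.coeff_eq_esymm_roots_of_splits hQsplit (k := 0) (Nat.zero_le _)
  rw [hQdeg, hlcQ, Nat.sub_zero, hQc, Nat.zero_add, hcoeff, if_pos (by omega),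
    (by omega : n - k = i)] at v0
  have hesP : Q.roots.esymm i = Q.roots.prod := by
    conv_lhs => rw [← hcards]
    exact esymm_card_eq_prod _
  rw [hesP] at v0
  have hkk : (k.descFactorial k : ℝ) = (k.factorial : ℝ) := by
    exact_mod_cast congrArg Nat.cast (Nat.descFactorial_self k)
  rw [hkk] at v0
  -- v0 : (k! : ℝ) * ((-1)^i * a i) = D * (-1)^i * prod
  have E1 : (k.factorial : ℝ) * a i = (n.descFactorial k : ℝ) * Q.roots.prod := by
    exact mul_left_cancel₀ (pow_ne_zero i (by norm_num : (-1:ℝ) ≠ 0))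
      (show (-1:ℝ)^i * ((k.factorial : ℝ) * a i)
          = (-1:ℝ)^i * ((n.descFactorial k : ℝ) * Q.roots.prod) by
        linear_combination v0)
  -- Vieta for Q at i-1
  have v1 := Polynomial.coeff_eq_esymm_roots_of_splits hQsplit (k := i-1) (by omega)
  rw [hQdeg, hlcQ, (by omega : i - (i-1) = 1), hQc, (by omega : i - 1 + k = n - 1),
    hcoeff, if_pos (by omega), (by omega : n - (n-1) = 1), ha 1 (by omega),
    esymm_one', esymm_one'] at v1
  -- v1 : E * ((-1)^1 * t.sum) = D * (-1)^1 * s.sum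
  have E2 : ((n-1).descFactorial k : ℝ) * P.roots.sum
      = (n.descFactorial k : ℝ) * Q.roots.sum := by
    have h := v1
    simp only [pow_one] at h
    linarith [h]
  -- nat identities
  have idA : i * n.descFactorial k = n * (n-1).descFactorial k := by
    obtain ⟨m, rfl⟩ : ∃ m, n = m + 1 := ⟨n - 1, by omega⟩
    have h1 := Nat.descFactorial_succ (m+1) k
    have h2 := Nat.succ_descFactorial_succ m k
    have : m + 1 - k = i := by omega
    rw [this] at h1
    simp only [Nat.add_sub_cancel] at h2 ⊢
    omega
  have idB : n.descFactorial k = n.choose i * k.factorial := by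
    have h1 := Nat.choose_mul_factorial_mul_factorial hin
    have h2 := Nat.factorial_mul_descFactorial (show k ≤ n by omega)
    rw [(by omega : n - k = i)] at h2
    have h3 : i.factorial * n.descFactorial k = i.factorial * (n.choose i * k.factorial) := by
      rw [h2, ← h1, (by omega : n - i = k)]; ring
    exact Nat.eq_of_mul_eq_mul_left (Nat.factorial_pos i) h3
  -- real versions
  have idA' : (i:ℝ) * (n.descFactorial k : ℝ) = (n:ℝ) * ((n-1).descFactorial k : ℝ) := by
    exact_mod_cast congrArg Nat.cast idA
  have idB' : (n.descFactorial k : ℝ) = (n.choose i : ℝ) * (k.factorial : ℝ) := by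
    exact_mod_cast congrArg Nat.cast idB
  have hsum : (n:ℝ) * Q.roots.sum = (i:ℝ) * a 1 := by
    have hD : (n.descFactorial k : ℝ) ≠ 0 := ne_of_gt hdpos
    apply mul_left_cancel₀ hD
    rw [ha1]
    linear_combination (-(n:ℝ)) * E2 - P.roots.sum * idA'
  have hin' : (0:ℝ) < (i:ℝ) := by exact_mod_cast (by omega : 0 < i)
  have hnn' : (0:ℝ) < (n:ℝ) := by exact_mod_cast (by omega : 0 < n)
  have hq : Q.roots.sum / (i:ℝ) = a 1 / (n:ℝ) := by
    rw [div_eq_div_iff (ne_of_gt hin') (ne_of_gt hnn')]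
    linarith [hsum]
  have hamgm : Q.roots.prod ≤ (Q.roots.sum / (i:ℝ)) ^ i :=
    amgm_multiset i (by omega) Q.roots hcards (fun x hx => le_of_lt (hspos x hx))
  rw [hq] at hamgm
  have hFpos : (0:ℝ) < (k.factorial : ℝ) := by exact_mod_cast k.factorial_pos
  have key : (k.factorial : ℝ) * a i ≤ (k.factorial : ℝ) * ((n.choose i : ℝ) * (a 1 / n) ^ i) := by
    rw [E1]
    calc (n.descFactorial k : ℝ) * Q.roots.prod
        ≤ (n.descFactorial k : ℝ) * (a 1 / n) ^ i :=
          mul_le_mul_of_nonneg_left hamgm (le_of_lt hdpos)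
      _ = (k.factorial : ℝ) * ((n.choose i : ℝ) * (a 1 / n) ^ i) := by rw [idB']; ring
  exact le_of_mul_le_mul_left key hFpos
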